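/- Lemma (concluding step of the proof of the paper's Claim 3.4). Let r be an order with levels on X, let (τ₀, ω₀) be a persistence pair of r, let ε > 0, and let q ∈ R_ε. Then every σ ∈ X^(n−1) with r̂(σ) ≥ r̂(τ₀) + ε satisfies σ ≻_q τ_{q,ω₀}; consequently G(r̂ ≥ r̂(τ₀) + ε) is a subgraph of G(≻_q τ_{q,ω₀}) and K_V(G(r̂ ≥ r̂(τ₀) + ε), ω₀) ⊆ K_V(G(≻_q τ_{q,ω₀}), ω₀). -/

import Mathlib

open scoped Classical

namespace StableVol

/-- A finite abstract simplicial complex of dimension `n`: a finite family of nonempty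
finite subsets of the vertex set, closed under nonempty subsets, in which every element
is contained in an element of cardinality `n+1`. -/
structure NComplex (V : Type*) [DecidableEq V] (n : ℕ) where
  X : Finset (Finset V)
  nonempty_mem : ∀ σ ∈ X, σ.Nonempty
  down_closed : ∀ σ ∈ X, ∀ σ' : Finset V, σ' ⊆ σ → σ'.Nonempty → σ' ∈ X
  contained_top : ∀ σ ∈ X, ∃ ω ∈ X, σ ⊆ ω ∧ ω.card = n + 1

variable {V : Type*} [DecidableEq V] {n : ℕ}

/-- An `n`-cell is either an `n`-simplex (`some ω`) or the formal cell `ω∞` (`none`). -/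
abbrev Cell (V : Type*) := Option (Finset V)

/-- `τ` is a face of the cell `c`.  For `c = some ω` this means that `ω` is an
`n`-simplex of `X` containing `τ`; the faces of `ω∞ = none` are the `(n-1)`-simplices
having exactly one `n`-simplex coface. -/
def faceCell (C : NComplex V n) (τ : Finset V) : Cell V → Prop
  | some ω => ω ∈ C.X ∧ ω.card = n + 1 ∧ τ ⊆ ω
  | none => {ω | ω ∈ C.X ∧ ω.card = n + 1 ∧ τ ⊆ ω}.ncard = 1

def IsCell (C : NComplex V n) : Cell V → Prop
  | some ω => ω ∈ C.X ∧ ω.card = n + 1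
  | none => True

/-- Adjacency in the dual graph, restricted to the edge set `E ⊆ X^(n-1)`. -/
def adj (C : NComplex V n) (E : Set (Finset V)) (c c' : Cell V) : Prop :=
  ∃ τ ∈ E, faceCell C τ c ∧ faceCell C τ c' ∧ c ≠ c'

/-- `KV C E c₀`: the set of `n`-cells in the connected component of `c₀` in the
subgraph of the dual graph with edge set `E`. -/
def KV (C : NComplex V n) (E : Set (Finset V)) (c₀ : Cell V) : Set (Cell V) :=
  {c | Relation.ReflTransGen (adj C E) c₀ c}

/-- Every `(n-1)`-simplex of `X` is a face of exactly two `n`-cells. -/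
def TwoCofaces (C : NComplex V n) : Prop :=
  ∀ τ ∈ C.X, τ.card = n →
    ∃ c₁ c₂ : Cell V, c₁ ≠ c₂ ∧ ∀ c : Cell V, faceCell C τ c ↔ (c = c₁ ∨ c = c₂)

/-- The dual graph (with full edge set `X^(n-1)`) is connected. -/
def DualConn (C : NComplex V n) : Prop :=
  ∀ c c' : Cell V, IsCell C c → IsCell C c' →
    c' ∈ KV C {τ | τ ∈ C.X ∧ τ.card = n} c

/-- A level function: monotone with respect to strict inclusion of simplices. -/
def IsLevelFun (C : NComplex V n) (lev : Finset V → ℝ) : Prop :=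
  ∀ σ ∈ C.X, ∀ σ' ∈ C.X, σ ⊂ σ' → lev σ ≤ lev σ'

/-- `(lev, slt)` is an order with levels on `X`: `lev` is a level function and `slt`
is (the strict form of) a linear order on `X` refining both `lev` and strict
inclusion. -/
def IsOWL (C : NComplex V n) (lev : Finset V → ℝ)
    (slt : Finset V → Finset V → Prop) : Prop :=
  IsLevelFun C lev ∧
  (∀ σ ∈ C.X, ¬ slt σ σ) ∧
  (∀ σ ∈ C.X, ∀ σ' ∈ C.X, ∀ σ'' ∈ C.X, slt σ σ' → slt σ' σ'' → slt σ σ'') ∧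
  (∀ σ ∈ C.X, ∀ σ' ∈ C.X, σ ≠ σ' → slt σ σ' ∨ slt σ' σ) ∧
  (∀ σ ∈ C.X, ∀ σ' ∈ C.X, slt σ σ' → lev σ ≤ lev σ') ∧
  (∀ σ ∈ C.X, ∀ σ' ∈ C.X, σ ⊂ σ' → slt σ σ')

/-- Extension of a strict order on simplices to `n`-cells, `ω∞ = none` being the
unique maximum. -/
def cslt (slt : Finset V → Finset V → Prop) : Cell V → Cell V → Prop
  | some σ, some σ' => slt σ σ'
  | some _, none => True
  | none, _ => False

/-- `m` is the maximum cell of the set `S` with respect to the order `slt`. -/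
def IsMaxCell (slt : Finset V → Finset V → Prop) (S : Set (Cell V)) (m : Cell V) :
    Prop :=
  m ∈ S ∧ ∀ c ∈ S, c ≠ m → cslt slt c m

/-- Edge set of `G(≻ σ₀)`: the `(n-1)`-simplices strictly above `σ₀`. -/
def Egt (C : NComplex V n) (slt : Finset V → Finset V → Prop) (σ₀ : Finset V) :
    Set (Finset V) :=
  {τ | τ ∈ C.X ∧ τ.card = n ∧ slt σ₀ τ}

/-- Edge set of `G(⪰ σ₀)`. -/
def Ege (C : NComplex V n) (slt : Finset V → Finset V → Prop) (σ₀ : Finset V) :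
    Set (Finset V) :=
  {τ | τ ∈ C.X ∧ τ.card = n ∧ (τ = σ₀ ∨ slt σ₀ τ)}

/-- Edge set of `G(lev ≥ s)`. -/
def Elev (C : NComplex V n) (lev : Finset V → ℝ) (s : ℝ) : Set (Finset V) :=
  {τ | τ ∈ C.X ∧ τ.card = n ∧ s ≤ lev τ}

/-- `(τ₀, ω₀)` is a persistence pair of the order `slt`: the two `n`-cells having
`τ₀` as a face lie in distinct connected components of `G(≻ τ₀)`, and `ω₀` is the
smaller of the two maximum cells of these two components. -/
def IsPersPair (C : NComplex V n) (slt : Finset V → Finset V → Prop)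
    (τ₀ ω₀ : Finset V) : Prop :=
  τ₀ ∈ C.X ∧ τ₀.card = n ∧ ω₀ ∈ C.X ∧ ω₀.card = n + 1 ∧
  ∃ c₁ c₂ : Cell V, c₁ ≠ c₂ ∧ faceCell C τ₀ c₁ ∧ faceCell C τ₀ c₂ ∧
    c₂ ∉ KV C (Egt C slt τ₀) c₁ ∧
    ∃ m₂ : Cell V,
      IsMaxCell slt (KV C (Egt C slt τ₀) c₁) (some ω₀) ∧
      IsMaxCell slt (KV C (Egt C slt τ₀) c₂) m₂ ∧
      cslt slt (some ω₀) m₂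

/-- The optimal volume `OV(q, ω₀) = K_V(G(≻_q τ_{q,ω₀}), ω₀)`. -/
def OV (C : NComplex V n) (slt : Finset V → Finset V → Prop) (ω₀ : Finset V) :
    Set (Cell V) :=
  {c | ∃ τ, IsPersPair C slt τ ω₀ ∧ c ∈ KV C (Egt C slt τ) (some ω₀)}

/-- The stable volume `SV_ε(r, τ₀, ω₀) = K_V(G(r̂ ≥ r̂(τ₀) + ε), ω₀)`. -/
def SV (C : NComplex V n) (lev : Finset V → ℝ) (τ₀ ω₀ : Finset V) (ε : ℝ) :
    Set (Cell V) :=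
  KV C (Elev C lev (lev τ₀ + ε)) (some ω₀)

/-- `(qlev, qslt) ∈ R_ε`: an order with levels uniformly `ε/2`-close to `rlev`
satisfying the `(r, ω₀)`-order condition. -/
def InR (C : NComplex V n) (rlev : Finset V → ℝ)
    (rslt : Finset V → Finset V → Prop) (ω₀ : Finset V) (ε : ℝ)
    (qlev : Finset V → ℝ) (qslt : Finset V → Finset V → Prop) : Prop :=
  IsOWL C qlev qslt ∧ (∀ σ ∈ C.X, |qlev σ - rlev σ| < ε / 2) ∧
  (∀ σ ∈ C.X, rslt σ ω₀ → qslt σ ω₀)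

/-- `F_{ε,n}`: the `n`-simplices with level at least `lev τ₀ + ε` that precede `ω₀`. -/
def Fcells (C : NComplex V n) (lev : Finset V → ℝ)
    (slt : Finset V → Finset V → Prop) (τ₀ ω₀ : Finset V) (ε : ℝ) :
    Set (Finset V) :=
  {σ | σ ∈ C.X ∧ σ.card = n + 1 ∧ lev τ₀ + ε ≤ lev σ ∧ slt σ ω₀}

/-- `F_{ε,n-1}`: the `(n-1)`-simplices with level at least `lev τ₀ + ε` that
precede `ω₀`. -/
def Fedges (C : NComplex V n) (lev : Finset V → ℝ)
    (slt : Finset V → Finset V → Prop) (τ₀ ω₀ : Finset V) (ε : ℝ) :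
    Set (Finset V) :=
  {σ | σ ∈ C.X ∧ σ.card = n ∧ lev τ₀ + ε ≤ lev σ ∧ slt σ ω₀}

/-- `τ*(∂z)`: the `ℤ/2ℤ`-sum of the coefficients of `z` over the `n`-simplex
cofaces of `τ`. -/
def bsum (C : NComplex V n) (τ : Finset V) (z : Finset V → ZMod 2) : ZMod 2 :=
  ∑ ω ∈ C.X.filter (fun ω => ω.card = n + 1 ∧ τ ⊆ ω), z ω

/-- A feasible chain `z = ω₀ + Σ_{ω ∈ F_{ε,n}} α_ω ω` with `τ*(∂z) = 0` for all
`τ ∈ F_{ε,n-1}`. -/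
def IsFeasible (C : NComplex V n) (lev : Finset V → ℝ)
    (slt : Finset V → Finset V → Prop) (τ₀ ω₀ : Finset V) (ε : ℝ)
    (z : Finset V → ZMod 2) : Prop :=
  z ω₀ = 1 ∧
  (∀ ω : Finset V, ω ≠ ω₀ → ω ∉ Fcells C lev slt τ₀ ω₀ ε → z ω = 0) ∧
  (∀ τ ∈ Fedges C lev slt τ₀ ω₀ ε, bsum C τ z = 0)

/-- `‖z‖₀`: the number of simplices of `X` with nonzero coefficient in `z`. -/
def norm0 (C : NComplex V n) (z : Finset V → ZMod 2) : ℕ :=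
  (C.X.filter fun ω => z ω ≠ 0).card

/-- The level function of the perturbed order `q(r, η, A)`. -/
noncomputable def pertLev (C : NComplex V n) (rlev : Finset V → ℝ) (η : ℝ)
    (A : Set (Finset V)) : Finset V → ℝ :=
  fun σ => if (σ ∈ C.X ∧ σ.card = n + 1) ∨ σ ∈ A then rlev σ + η else rlev σ - η

/-- The strict order of the perturbed order `q(r, η, A)`. -/
def pertSlt (C : NComplex V n) (rlev : Finset V → ℝ)
    (rslt : Finset V → Finset V → Prop) (η : ℝ) (A : Set (Finset V)) :
    Finset V → Finset V → Prop :=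
  fun σ σ' => pertLev C rlev η A σ < pertLev C rlev η A σ' ∨
    (pertLev C rlev η A σ = pertLev C rlev η A σ' ∧ rslt σ σ')

/-- The `(n-1)`-simplices that are edges of the connected component of `c₀` in the
subgraph with edge set `E`. -/
def compEdges (C : NComplex V n) (E : Set (Finset V)) (c₀ : Cell V) :
    Set (Finset V) :=
  {τ | τ ∈ E ∧ ∃ c, faceCell C τ c ∧ c ∈ KV C E c₀}

/-- `IsPath C E c c' vs es`: `vs` is the vertex list and `es` the edge list of a walk
from `c` to `c'` in the subgraph of the dual graph with edge set `E`. -/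
inductive IsPath (C : NComplex V n) (E : Set (Finset V)) :
    Cell V → Cell V → List (Cell V) → List (Finset V) → Prop
  | nil (c : Cell V) : IsPath C E c c [c] []
  | cons {c c' c'' : Cell V} {vs : List (Cell V)} {es : List (Finset V)}
      {τ : Finset V} : τ ∈ E → faceCell C τ c → faceCell C τ c' → c ≠ c' →
      IsPath C E c' c'' vs es → IsPath C E c c'' (c :: vs) (τ :: es)


lemma adj_symm {C : NComplex V n} {E : Set (Finset V)} {c c' : Cell V}
    (h : adj C E c c') : adj C E c' c := by
  obtain ⟨τ, h1, h2, h3, h4⟩ := h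
  exact ⟨τ, h1, h3, h2, h4.symm⟩

lemma adj_mono {C : NComplex V n} {E E' : Set (Finset V)} (hE : E ⊆ E')
    {c c' : Cell V} (h : adj C E c c') : adj C E' c c' := by
  obtain ⟨τ, h1, h2, h3, h4⟩ := h
  exact ⟨τ, hE h1, h2, h3, h4⟩

lemma rtg_mono {C : NComplex V n} {E E' : Set (Finset V)} (hE : E ⊆ E')
    {c c' : Cell V} (h : Relation.ReflTransGen (adj C E) c c') :
    Relation.ReflTransGen (adj C E') c c' :=
  Relation.ReflTransGen.mono (fun _ _ hab => adj_mono hE hab) _ _ h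

lemma cell_mem_X {C : NComplex V n} {E : Set (Finset V)} {c₀ c : Cell V}
    (h : Relation.ReflTransGen (adj C E) c₀ c)
    (h0 : ∀ ω : Finset V, c₀ = some ω → ω ∈ C.X) :
    ∀ ω : Finset V, c = some ω → ω ∈ C.X := by
  induction h with
  | refl => exact h0
  | tail _ hadj _ =>
      intro ω hω
      subst hω
      obtain ⟨τ, _, _, hf, _⟩ := hadj
      exact hf.1

/-- concluding step of the proof of Claim 3.4: every
`(n-1)`-simplex of level at least `r̂(τ₀) + ε` is `≻_q τ_{q,ω₀}`; hence
`G(r̂ ≥ r̂(τ₀)+ε)` is a subgraph of `G(≻_q τ_{q,ω₀})` and the corresponding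
components of `ω₀` are nested. -/
theorem level_graph_subgraph_of_q_graph
    (hn : 2 ≤ n) (C : NComplex V n) (htwo : TwoCofaces C) (hconn : DualConn C)
    (rlev : Finset V → ℝ) (rslt : Finset V → Finset V → Prop)
    (hr : IsOWL C rlev rslt)
    (τ₀ ω₀ : Finset V) (hpair : IsPersPair C rslt τ₀ ω₀)
    (ε : ℝ) (hε : 0 < ε)
    (qlev : Finset V → ℝ) (qslt : Finset V → Finset V → Prop)
    (hq : InR C rlev rslt ω₀ ε qlev qslt) :
    (∀ σ ∈ C.X, σ.card = n → rlev τ₀ + ε ≤ rlev σ →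
      ∀ τq : Finset V, IsPersPair C qslt τq ω₀ → qslt τq σ) ∧
    ∀ τq : Finset V, IsPersPair C qslt τq ω₀ →
      Elev C rlev (rlev τ₀ + ε) ⊆ Egt C qslt τq ∧
      KV C (Elev C rlev (rlev τ₀ + ε)) (some ω₀) ⊆
        KV C (Egt C qslt τq) (some ω₀) := by
  obtain ⟨hrlev, hrirr, hrtrans, hrtot, hrlevc, hrsub⟩ := hr
  obtain ⟨⟨hqlev, hqirr, hqtrans, hqtot, hqlevc, hqsub⟩, hclose, hord⟩ := hq
  obtain ⟨hτ₀X, hτ₀c, hω₀X, hω₀c, c₁, c₂, hc12, hf1, hf2, hnc, m₂, hmax1, hmax2, hcs⟩ :=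
    hpair
  have key : ∀ σ ∈ C.X, σ.card = n → rlev τ₀ + ε ≤ rlev σ →
      ∀ τq : Finset V, IsPersPair C qslt τq ω₀ → qslt τq σ := by
    intro σ hσX hσc hσlev τq hqpair
    obtain ⟨hτqX, hτqc, _, _, d₁, d₂, hd12, hg1, hg2, hnd, m₂', hqmax1, hqmax2, hqcs⟩ :=
      hqpair
    -- a walk from ω₀ to m₂' using edges ⪰_q τq
    have hEgtq : Egt C qslt τq ⊆ Ege C qslt τq := by
      rintro τ ⟨h1, h2, h3⟩; exact ⟨h1, h2, Or.inr h3⟩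
    have hτqEq : τq ∈ Ege C qslt τq := ⟨hτqX, hτqc, Or.inl rfl⟩
    have w1 : Relation.ReflTransGen (adj C (Egt C qslt τq)) d₁ (some ω₀) := hqmax1.1
    have w2 : Relation.ReflTransGen (adj C (Egt C qslt τq)) d₂ m₂' := hqmax2.1
    have w1' : Relation.ReflTransGen (adj C (Ege C qslt τq)) (some ω₀) d₁ :=
      rtg_mono hEgtq
        ((@Relation.ReflTransGen.stdSymm _ _ ⟨fun _ _ h => adj_symm h⟩).symm _ _ w1)
    have wstep : Relation.ReflTransGen (adj C (Ege C qslt τq)) d₁ d₂ :=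
      Relation.ReflTransGen.single ⟨τq, hτqEq, hg1, hg2, hd12⟩
    have walk : Relation.ReflTransGen (adj C (Ege C qslt τq)) (some ω₀) m₂' :=
      (w1'.trans wstep).trans (rtg_mono hEgtq w2)
    -- m₂' lies in C.X if it is a simplex
    have hm₂X : ∀ ω : Finset V, m₂' = some ω → ω ∈ C.X := by
      refine cell_mem_X w2 ?_
      intro ω hω
      subst hω
      exact hg2.1
    -- there is an edge on the walk not in Egt C rslt τ₀
    have hex : ∃ τ' ∈ Ege C qslt τq, τ' ∉ Egt C rslt τ₀ := by
      by_contra hcon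
      push_neg at hcon
      have walk' : Relation.ReflTransGen (adj C (Egt C rslt τ₀)) (some ω₀) m₂' :=
        rtg_mono hcon walk
      have hmem : m₂' ∈ KV C (Egt C rslt τ₀) c₁ := hmax1.1.trans walk'
      have hne : m₂' ≠ some ω₀ := by
        rintro rfl
        exact hqirr ω₀ hω₀X hqcs
      have hlt := hmax1.2 m₂' hmem hne
      cases m₂' with
      | none => exact hlt
      | some μ =>
          have hμX : μ ∈ C.X := hm₂X μ rfl
          have hq1 : qslt μ ω₀ := hord μ hμX hlt
          exact hqirr ω₀ hω₀X (hqtrans ω₀ hω₀X μ hμX ω₀ hω₀X hqcs hq1)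
    obtain ⟨τ', ⟨hτ'X, hτ'c, hτ'ge⟩, hτ'notr⟩ := hex
    have hnr : ¬ rslt τ₀ τ' := fun h => hτ'notr ⟨hτ'X, hτ'c, h⟩
    have hrlev' : rlev τ' ≤ rlev τ₀ := by
      rcases eq_or_ne τ' τ₀ with rfl | hne
      · exact le_refl _
      · rcases hrtot τ₀ hτ₀X τ' hτ'X (Ne.symm hne) with h1 | h2
        · exact absurd h1 hnr
        · exact hrlevc τ' hτ'X τ₀ hτ₀X h2
    have hq' : qlev τ' < rlev τ₀ + ε / 2 := by
      have h1 := hclose τ' hτ'X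
      rw [abs_lt] at h1
      linarith [h1.2]
    have hqσ : rlev τ₀ + ε / 2 < qlev σ := by
      have h1 := hclose σ hσX
      rw [abs_lt] at h1
      linarith [h1.1]
    have hlt : qlev τ' < qlev σ := lt_trans hq' hqσ
    have hne : τ' ≠ σ := by
      rintro rfl
      exact lt_irrefl _ hlt
    have hq2 : qslt τ' σ := by
      rcases hqtot τ' hτ'X σ hσX hne with h | h
      · exact h
      · exact absurd (hqlevc σ hσX τ' hτ'X h) (not_le.2 hlt)
    rcases hτ'ge with rfl | h
    · exact hq2
    · exact hqtrans τq hτqX τ' hτ'X σ hσX h hq2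
  refine ⟨key, ?_⟩
  intro τq hqpair
  have hsub : Elev C rlev (rlev τ₀ + ε) ⊆ Egt C qslt τq := by
    rintro τ ⟨h1, h2, h3⟩
    exact ⟨h1, h2, key τ h1 h2 h3 τq hqpair⟩
  exact ⟨hsub, fun c hc => rtg_mono hsub hc⟩

end StableVol
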